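/- arXiv:2112.04714 — 3 statements merged into one kernel-verified Lean document; each statement's English description precedes it below -/
import Mathlib

section
/- Let x ∈ (0,1] have Lüroth digits (aₙ) with lim inf Lⁿ(x) > 0. Then the asymptotic set AS_L(x) = {y ≠ x : |Lⁿ(x) - Lⁿ(y)| → 0} equals the set of y = ⟨b₁,b₂,...⟩ such that bₙ = aₙ for all sufficiently large n; in particular, AS_L(x) is countable. -/
/-- The first Lüroth digit of `x`: the unique integer `a ≥ 2` with
`1/a < x ≤ 1/(a-1)` (for `x ∈ (0,1]`). -/
noncomputable def lurothDigit (x : ℝ) : ℕ := ⌊1 / x⌋₊ + 1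

/-- The Lüroth map on `[0,1]`. -/
noncomputable def lurothMap (x : ℝ) : ℝ :=
  if x = 0 then 0
  else (lurothDigit x : ℝ) * ((lurothDigit x : ℝ) - 1) * x - ((lurothDigit x : ℝ) - 1)

/-- The Lüroth digit sequence of `x` (0-indexed: `lurothDigitSeq x n = a_{n+1}(x)`). -/
noncomputable def lurothDigitSeq (x : ℝ) (n : ℕ) : ℕ := lurothDigit (lurothMap^[n] x)

/-- The `n`-th term of the Lüroth series associated with the digit sequence `a`. -/
noncomputable def lurothTerm (a : ℕ → ℕ) (n : ℕ) : ℝ :=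
  (∏ j ∈ Finset.range n, (1 : ℝ) / ((a j : ℝ) * ((a j : ℝ) - 1))) * (1 / (a n : ℝ))

/-- The value of the Lüroth series with digit sequence `a`. -/
noncomputable def lurothVal (a : ℕ → ℕ) : ℝ := ∑' n, lurothTerm a n

/-- The finite Lüroth sum `⟨c₁, …, cₙ⟩`. -/
noncomputable def lurothFinSum (c : ℕ → ℕ) (n : ℕ) : ℝ := ∑ k ∈ Finset.range n, lurothTerm c k

/-- The fundamental interval of level `n` with digits `c`. -/
noncomputable def fundamentalInterval (n : ℕ) (c : ℕ → ℕ) : Set ℝ :=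
  {x | x ∈ Set.Ioc (0 : ℝ) 1 ∧ ∀ j < n, lurothDigitSeq x j = c j}

/-- The asymptotic set of `x` for the Lüroth map. -/
noncomputable def asymptoticSet (x : ℝ) : Set ℝ :=
  {y | y ∈ Set.Icc (0 : ℝ) 1 ∧ y ≠ x ∧
    Filter.Tendsto (fun n => |lurothMap^[n] x - lurothMap^[n] y|) Filter.atTop (nhds 0)}

open Filter Set

lemma lurothDigit_two_le {x : ℝ} (hx : x ∈ Set.Ioc (0:ℝ) 1) : 2 ≤ lurothDigit x := by
  have h1 : 1 ≤ ⌊1/x⌋₊ := by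
    apply Nat.le_floor
    rw [Nat.cast_one, le_div_iff₀ hx.1]
    linarith [hx.2]
  simpa [lurothDigit] using h1

lemma inv_digit_lt {x : ℝ} (hx : x ∈ Set.Ioc (0:ℝ) 1) :
    1 / (lurothDigit x : ℝ) < x := by
  have h : 1/x < ((lurothDigit x : ℕ) : ℝ) := by
    have := Nat.lt_floor_add_one (1/x)
    simp only [lurothDigit]; push_cast; linarith
  have ha : (0:ℝ) < (lurothDigit x : ℝ) := by
    have := lurothDigit_two_le hx; positivity
  rw [div_lt_iff₀ hx.1] at h
  rw [div_lt_iff₀ ha]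
  linarith

lemma le_inv_digit_sub_one {x : ℝ} (hx : x ∈ Set.Ioc (0:ℝ) 1) :
    x ≤ 1 / ((lurothDigit x : ℝ) - 1) := by
  have h : ((lurothDigit x : ℝ) - 1) ≤ 1/x := by
    have := Nat.floor_le (R := ℝ) (a := 1/x) (le_of_lt (div_pos one_pos hx.1))
    simp only [lurothDigit]; push_cast; linarith
  have h1 : (1:ℝ) ≤ (lurothDigit x : ℝ) - 1 := by
    have := lurothDigit_two_le hx
    have : (2:ℝ) ≤ (lurothDigit x : ℝ) := by exact_mod_cast this
    linarith
  rw [le_div_iff₀ (by linarith)]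
  calc x * ((lurothDigit x:ℝ) - 1) ≤ x * (1/x) := by
        apply mul_le_mul_of_nonneg_left h hx.1.le
    _ = 1 := by
        rw [mul_one_div]
        exact div_self hx.1.ne'

lemma lurothMap_eq {x : ℝ} (hx : x ≠ 0) :
    lurothMap x = (lurothDigit x : ℝ) * ((lurothDigit x : ℝ) - 1) * x - ((lurothDigit x : ℝ) - 1) := by
  simp [lurothMap, hx]

lemma lurothMap_mem {x : ℝ} (hx : x ∈ Set.Ioc (0:ℝ) 1) : lurothMap x ∈ Set.Ioc (0:ℝ) 1 := by
  have ha2 : (2:ℝ) ≤ (lurothDigit x : ℝ) := by exact_mod_cast lurothDigit_two_le hx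
  have h1 := inv_digit_lt hx
  have h2 := le_inv_digit_sub_one hx
  rw [lurothMap_eq hx.1.ne']
  set A := (lurothDigit x : ℝ)
  constructor
  · have : 1 < A * x := by
      rw [div_lt_iff₀ (by linarith)] at h1; linarith
    nlinarith
  · have : (A - 1) * x ≤ 1 := by
      rw [le_div_iff₀ (by linarith)] at h2; linarith
    nlinarith

lemma iter_mem {x : ℝ} (hx : x ∈ Set.Ioc (0:ℝ) 1) (n : ℕ) :
    lurothMap^[n] x ∈ Set.Ioc (0:ℝ) 1 := by
  induction n with
  | zero => simpa using hx
  | succ n ih => rw [Function.iterate_succ_apply']; exact lurothMap_mem ih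

lemma lurothDigit_eq {a : ℕ} (ha : 2 ≤ a) {v : ℝ} (hv : 0 < v)
    (h1 : 1/(a:ℝ) < v) (h2 : v ≤ 1/((a:ℝ)-1)) : lurothDigit v = a := by
  have ha' : (2:ℝ) ≤ (a:ℝ) := by exact_mod_cast ha
  have hfl : ⌊1/v⌋₊ = a - 1 := by
    rw [Nat.floor_eq_iff (by positivity)]
    have hc : ((a - 1 : ℕ) : ℝ) = (a:ℝ) - 1 := by
      have : 1 ≤ a := by omega
      push_cast [this]; ring
    rw [hc]
    constructor
    · rw [le_div_iff₀ hv]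
      rw [le_div_iff₀ (by linarith)] at h2
      linarith
    · rw [div_lt_iff₀ hv]
      rw [div_lt_iff₀ (by linarith)] at h1
      linarith
  simp only [lurothDigit, hfl]; omega

lemma contract {u v : ℝ} (hu : u ∈ Set.Ioc (0:ℝ) 1) (hv : v ∈ Set.Ioc (0:ℝ) 1)
    (h : lurothDigit u = lurothDigit v) :
    lurothMap u - lurothMap v = (lurothDigit u : ℝ) * ((lurothDigit u : ℝ) - 1) * (u - v) := by
  rw [lurothMap_eq hu.1.ne', lurothMap_eq hv.1.ne', ← h]; ring

lemma two_mul_abs_le {u v : ℝ} (hu : u ∈ Set.Ioc (0:ℝ) 1) (hv : v ∈ Set.Ioc (0:ℝ) 1)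
    (h : lurothDigit u = lurothDigit v) :
    2 * |u - v| ≤ |lurothMap u - lurothMap v| := by
  rw [contract hu hv h, abs_mul]
  have ha : (2:ℝ) ≤ (lurothDigit u : ℝ) := by exact_mod_cast lurothDigit_two_le hu
  have h2 : (2:ℝ) ≤ |(lurothDigit u : ℝ) * ((lurothDigit u : ℝ) - 1)| := by
    rw [abs_of_nonneg (by nlinarith)]; nlinarith
  nlinarith [abs_nonneg (u - v)]

lemma iter_contract {u v : ℝ} (hu : u ∈ Set.Ioc (0:ℝ) 1) (hv : v ∈ Set.Ioc (0:ℝ) 1)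
    (k : ℕ) (h : ∀ j < k, lurothDigit (lurothMap^[j] u) = lurothDigit (lurothMap^[j] v)) :
    2^k * |u - v| ≤ |lurothMap^[k] u - lurothMap^[k] v| := by
  induction k with
  | zero => simp
  | succ k ih =>
    have hk : 2^k * |u - v| ≤ |lurothMap^[k] u - lurothMap^[k] v| :=
      ih (fun j hj => h j (by omega))
    have := two_mul_abs_le (iter_mem hu k) (iter_mem hv k) (h k (by omega))
    rw [Function.iterate_succ_apply', Function.iterate_succ_apply']
    calc 2^(k+1) * |u - v| = 2 * (2^k * |u - v|) := by ring
      _ ≤ 2 * |lurothMap^[k] u - lurothMap^[k] v| := by linarith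
      _ ≤ _ := this

lemma eq_of_digits_eq {u v : ℝ} (hu : u ∈ Set.Ioc (0:ℝ) 1) (hv : v ∈ Set.Ioc (0:ℝ) 1)
    (h : ∀ j, lurothDigit (lurothMap^[j] u) = lurothDigit (lurothMap^[j] v)) : u = v := by
  have habs : ∀ k : ℕ, |u - v| ≤ (1/2)^k := by
    intro k
    have h1 := iter_contract hu hv k (fun j _ => h j)
    have h2 : |lurothMap^[k] u - lurothMap^[k] v| ≤ 1 := by
      have a1 := iter_mem hu k; have a2 := iter_mem hv k
      rw [abs_sub_le_iff]; constructor <;> [linarith [a1.2, a2.1]; linarith [a2.2, a1.1]]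
    have hp : (0:ℝ) < 2^k := by positivity
    rw [div_pow, one_pow, le_div_iff₀ hp]
    linarith
  have : |u - v| ≤ 0 := by
    refine le_of_tendsto_of_tendsto tendsto_const_nhds
      (tendsto_pow_atTop_nhds_zero_of_lt_one (by norm_num : (0:ℝ) ≤ 1/2) (by norm_num)) ?_
    exact Filter.eventually_atTop.mpr ⟨0, fun k _ => habs k⟩
  have := abs_nonneg (u - v)
  have : |u - v| = 0 := le_antisymm ‹_› ‹_›
  linarith [abs_eq_zero.mp this, sub_eq_zero.mp (abs_eq_zero.mp this)]

lemma digit_eq_of_close {ε δ u v : ℝ} {A : ℕ} (hε : 0 < ε)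
    (hu : u ∈ Set.Ioc (0:ℝ) 1) (hv : v ∈ Set.Ioc (0:ℝ) 1)
    (hεLu : ε < lurothMap u) (hA : lurothDigit u ≤ A)
    (hδ : ((A:ℝ)^2 + 1) * δ ≤ ε)
    (h1 : |u - v| < δ) (h2 : |lurothMap u - lurothMap v| < δ) :
    lurothDigit v = lurothDigit u := by
  by_contra hne
  set a := lurothDigit u with ha_def
  have ha2 : 2 ≤ a := lurothDigit_two_le hu
  have har : (2:ℝ) ≤ (a:ℝ) := by exact_mod_cast ha2
  have hAr : (a:ℝ) ≤ (A:ℝ) := by exact_mod_cast hA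
  have hδpos : 0 < δ := lt_of_le_of_lt (abs_nonneg _) h1
  have hLu : lurothMap u = (a:ℝ)*((a:ℝ)-1)*u - ((a:ℝ)-1) := lurothMap_eq hu.1.ne'
  have huv1 : u - v < δ := lt_of_le_of_lt (le_abs_self _) h1
  have huv2 : v - u < δ := by
    have := abs_sub_comm u v ▸ h1
    rw [abs_sub_comm] at h1
    exact lt_of_le_of_lt (le_abs_self _) h1
  by_cases hle : v ≤ 1/(a:ℝ)
  · -- Case 1 : v below u's cylinder
    have hu' : u < 1/(a:ℝ) + δ := by linarith
    have hkey : lurothMap u < ((A:ℝ)^2) * δ := by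
      rw [hLu]
      have hau : (a:ℝ) * u < 1 + (a:ℝ)*δ := by
        have := mul_lt_mul_of_pos_left hu' (show (0:ℝ) < a by linarith)
        rw [mul_add, mul_one_div, div_self (by linarith : (a:ℝ) ≠ 0)] at this
        linarith
      nlinarith [mul_lt_mul_of_pos_left hau (show (0:ℝ) < (a:ℝ)-1 by linarith),
        mul_le_mul_of_nonneg_right (show ((a:ℝ)-1)*(a:ℝ) ≤ (A:ℝ)^2 by nlinarith) hδpos.le]
    linarith
  · push_neg at hle
    have hva : 1/((a:ℝ)-1) < v := by
      by_contra hc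
      push_neg at hc
      exact hne (lurothDigit_eq ha2 hv.1 hle hc)
    set b := lurothDigit v with hb_def
    have hb2 : 2 ≤ b := lurothDigit_two_le hv
    have hbr : (2:ℝ) ≤ (b:ℝ) := by exact_mod_cast hb2
    have hvb : v ≤ 1/((b:ℝ)-1) := le_inv_digit_sub_one hv
    have hba : (b:ℝ) ≤ (a:ℝ) - 1 := by
      have h' : 1/((a:ℝ)-1) < 1/((b:ℝ)-1) := lt_of_lt_of_le hva hvb
      have hb1 : (0:ℝ) < (b:ℝ) - 1 := by linarith
      have ha1 : (0:ℝ) < (a:ℝ) - 1 := by linarith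
      have : (b:ℝ) - 1 < (a:ℝ) - 1 := by
        rw [div_lt_div_iff₀ ha1 hb1] at h'
        linarith
      have : b < a := by exact_mod_cast (by linarith : (b:ℝ) < (a:ℝ))
      have : b ≤ a - 1 := by omega
      calc (b:ℝ) ≤ ((a-1:ℕ):ℝ) := by exact_mod_cast this
        _ = (a:ℝ) - 1 := by push_cast [Nat.one_le_iff_ne_zero.mpr (by omega : a ≠ 0)]; ring
    have hLv : lurothMap v = (b:ℝ)*((b:ℝ)-1)*v - ((b:ℝ)-1) := lurothMap_eq hv.1.ne'
    have hu2 : u ≤ 1/((a:ℝ)-1) := le_inv_digit_sub_one hu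
    have hv' : v < 1/((a:ℝ)-1) + δ := by linarith
    have hav : ((a:ℝ)-1) * v < 1 + ((a:ℝ)-1)*δ := by
      have := mul_lt_mul_of_pos_left hv' (show (0:ℝ) < (a:ℝ)-1 by linarith)
      rw [mul_add, mul_one_div, div_self (by linarith : (a:ℝ)-1 ≠ 0)] at this
      linarith
    have hkey : lurothMap v < ((A:ℝ)^2) * δ := by
      rw [hLv]
      have hbv : (b:ℝ) * v ≤ ((a:ℝ)-1) * v := by
        apply mul_le_mul_of_nonneg_right hba hv.1.le
      nlinarith [mul_le_mul_of_nonneg_left hbv (show (0:ℝ) ≤ (b:ℝ)-1 by linarith),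
        mul_lt_mul_of_pos_left hav (show (0:ℝ) < (b:ℝ)-1 by linarith),
        mul_le_mul_of_nonneg_right (show ((b:ℝ)-1)*((a:ℝ)-1) ≤ (A:ℝ)^2 by nlinarith) hδpos.le]
    have hdiff : lurothMap u - lurothMap v < δ := lt_of_le_of_lt (le_abs_self _) h2
    linarith

lemma lurothDigit_le_of_lt {ε u : ℝ} (hε : 0 < ε) (hεu : ε < u) :
    lurothDigit u ≤ ⌊1/ε⌋₊ + 1 := by
  have h : ⌊1/u⌋₊ ≤ ⌊1/ε⌋₊ := Nat.floor_le_floor (one_div_le_one_div_of_le hε hεu.le)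
  simp only [lurothDigit]; omega

lemma fiber_countable (w : ℝ) :
    {y : ℝ | y ∈ Set.Ioc (0:ℝ) 1 ∧ lurothMap y = w}.Countable := by
  rw [Set.countable_iff_exists_injOn]
  refine ⟨fun y => lurothDigit y, fun y1 h1 y2 h2 hd => ?_⟩
  have := contract h1.1 h2.1 hd
  rw [h1.2, h2.2, sub_self] at this
  have ha : (2:ℝ) ≤ (lurothDigit y1 : ℝ) := by exact_mod_cast lurothDigit_two_le h1.1
  have : y1 - y2 = 0 := by
    rcases mul_eq_zero.mp this.symm with h | h
    · nlinarith
    · exact h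
  linarith

lemma preimage_countable (z : ℝ) (N : ℕ) :
    {y : ℝ | y ∈ Set.Ioc (0:ℝ) 1 ∧ lurothMap^[N] y = z}.Countable := by
  induction N with
  | zero =>
    apply Set.Countable.mono _ (Set.countable_singleton z)
    intro y hy
    simp only [Function.iterate_zero_apply] at hy
    simp [hy.2]
  | succ N ih =>
    have hsub : {y : ℝ | y ∈ Set.Ioc (0:ℝ) 1 ∧ lurothMap^[N+1] y = z} ⊆
        ⋃ w ∈ {w : ℝ | w ∈ Set.Ioc (0:ℝ) 1 ∧ lurothMap^[N] w = z},
          {y : ℝ | y ∈ Set.Ioc (0:ℝ) 1 ∧ lurothMap y = w} := by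
      intro y hy
      rw [Set.mem_iUnion₂]
      refine ⟨lurothMap y, ⟨lurothMap_mem hy.1, ?_⟩, hy.1, rfl⟩
      rw [← Function.iterate_succ_apply]
      exact hy.2
    exact (ih.biUnion fun w _ => fiber_countable w).mono hsub

lemma orbit_eq_of_eventual {x y : ℝ} (hx : x ∈ Set.Ioc (0:ℝ) 1) (hy : y ∈ Set.Ioc (0:ℝ) 1)
    (N : ℕ) (hN : ∀ n ≥ N, lurothDigitSeq y n = lurothDigitSeq x n) :
    lurothMap^[N] x = lurothMap^[N] y := by
  apply eq_of_digits_eq (iter_mem hx N) (iter_mem hy N)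
  intro j
  have h1 := hN (j + N) (by omega)
  simp only [lurothDigitSeq] at h1
  rw [← Function.iterate_add_apply, ← Function.iterate_add_apply]
  exact h1.symm


/-- If `x ∈ (0,1]` has `liminf Lⁿ(x) > 0`, then `AS_L(x)` is the set of
`y ≠ x` in `(0,1]` whose Lüroth digits eventually agree with those of `x`;
in particular `AS_L(x)` is countable. -/
theorem asymptoticSet_of_liminf_pos (x : ℝ) (hx : x ∈ Set.Ioc (0 : ℝ) 1)
    (hlim : 0 < Filter.atTop.liminf (fun n => lurothMap^[n] x)) :
    asymptoticSet x =
      {y | y ∈ Set.Ioc (0 : ℝ) 1 ∧ y ≠ x ∧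
        ∃ N : ℕ, ∀ n ≥ N, lurothDigitSeq y n = lurothDigitSeq x n} ∧
    (asymptoticSet x).Countable := by
  set c := Filter.atTop.liminf (fun n => lurothMap^[n] x) with hc
  have hbdd : Filter.IsBoundedUnder (· ≥ ·) Filter.atTop (fun n => lurothMap^[n] x) :=
    Filter.isBoundedUnder_of ⟨0, fun n => (iter_mem hx n).1.le⟩
  have heps : ∀ᶠ n in Filter.atTop, c/2 < lurothMap^[n] x :=
    Filter.eventually_lt_of_lt_liminf (by linarith) hbdd
  have hε : (0:ℝ) < c/2 := by linarith
  have hset : asymptoticSet x =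
      {y | y ∈ Set.Ioc (0 : ℝ) 1 ∧ y ≠ x ∧
        ∃ N : ℕ, ∀ n ≥ N, lurothDigitSeq y n = lurothDigitSeq x n} := by
    ext y
    constructor
    · rintro ⟨hyIcc, hyne, htend⟩
      have hy0 : 0 < y := by
        rcases hyIcc.1.lt_or_eq with h | h
        · exact h
        · exfalso
          have hfix : ∀ n : ℕ, lurothMap^[n] y = 0 := by
            intro n
            rw [← h] at *
            rw [Function.iterate_fixed (by simp [lurothMap]) n]
          have htend' : Filter.Tendsto (fun n => lurothMap^[n] x) Filter.atTop (nhds 0) :=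
            (tendsto_zero_iff_abs_tendsto_zero (fun n => lurothMap^[n] x)).mpr
              (htend.congr fun n => by simp [Function.comp, hfix n])
          have := htend'.liminf_eq
          rw [← hc] at this
          linarith
      have hyIoc : y ∈ Set.Ioc (0:ℝ) 1 := ⟨hy0, hyIcc.2⟩
      set A : ℕ := ⌊1/(c/2)⌋₊ + 1 with hA_def
      set δ : ℝ := (c/2) / ((A:ℝ)^2 + 2) with hδ_def
      have hδpos : 0 < δ := by positivity
      have hδ : ((A:ℝ)^2 + 1) * δ ≤ c/2 := by
        rw [hδ_def, mul_div_assoc', div_le_iff₀ (by positivity)]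
        nlinarith
      have hδev : ∀ᶠ n in Filter.atTop, |lurothMap^[n] x - lurothMap^[n] y| < δ :=
        htend.eventually (gt_mem_nhds hδpos)
      obtain ⟨N, hN⟩ := Filter.eventually_atTop.mp (heps.and hδev)
      refine ⟨hyIoc, hyne, N, fun n hn => ?_⟩
      have hLu : c/2 < lurothMap (lurothMap^[n] x) := by
        rw [← Function.iterate_succ_apply' lurothMap n x]
        exact (hN (n+1) (by omega)).1
      have h2 : |lurothMap (lurothMap^[n] x) - lurothMap (lurothMap^[n] y)| < δ := by
        rw [← Function.iterate_succ_apply' lurothMap n x,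
          ← Function.iterate_succ_apply' lurothMap n y]
        exact (hN (n+1) (by omega)).2
      exact digit_eq_of_close hε (iter_mem hx n) (iter_mem hyIoc n) hLu
        (lurothDigit_le_of_lt hε (hN n hn).1) hδ (hN n hn).2 h2
    · rintro ⟨hyIoc, hyne, N, hN⟩
      have horbN : lurothMap^[N] x = lurothMap^[N] y := orbit_eq_of_eventual hx hyIoc N hN
      have horb : ∀ n ≥ N, lurothMap^[n] x = lurothMap^[n] y := by
        intro n hn
        obtain ⟨k, rfl⟩ := Nat.exists_eq_add_of_le hn
        rw [Nat.add_comm, Function.iterate_add_apply, Function.iterate_add_apply, horbN]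
      refine ⟨⟨hyIoc.1.le, hyIoc.2⟩, hyne, ?_⟩
      apply Filter.Tendsto.congr' _ (tendsto_const_nhds (x := (0:ℝ)))
      refine Filter.eventually_atTop.mpr ⟨N, fun n hn => ?_⟩
      simp only [horb n hn, sub_self, abs_zero]
  refine ⟨hset, ?_⟩
  rw [hset]
  have hsub : {y | y ∈ Set.Ioc (0 : ℝ) 1 ∧ y ≠ x ∧
        ∃ N : ℕ, ∀ n ≥ N, lurothDigitSeq y n = lurothDigitSeq x n} ⊆
      ⋃ N : ℕ, {y : ℝ | y ∈ Set.Ioc (0:ℝ) 1 ∧ lurothMap^[N] y = lurothMap^[N] x} := by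
    rintro y ⟨hyIoc, _, N, hN⟩
    exact Set.mem_iUnion.mpr ⟨N, hyIoc, (orbit_eq_of_eventual hx hyIoc N hN).symm⟩
  exact (Set.countable_iUnion fun N => preimage_countable (lurothMap^[N] x) N).mono hsub
end

section
/- Let I_k be a Lüroth fundamental interval of level k. Then for every interval (α,β] ⊆ (0,1] and every n ≥ k, the Lebesgue measure satisfies m(L⁻ⁿ((α,β]) ∩ I_k) = m((α,β]) · m(I_k). -/
open MeasureTheory Set

noncomputable def lurothProd (k : ℕ) (c : ℕ → ℕ) : ℝ :=
  ∏ j ∈ Finset.range k, (1 : ℝ) / ((c j : ℝ) * ((c j : ℝ) - 1))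

lemma lurothProd_pos (k : ℕ) (c : ℕ → ℕ) (hc : ∀ j < k, 2 ≤ c j) :
    0 < lurothProd k c := by
  apply Finset.prod_pos
  intro j hj
  have h2 : (2 : ℝ) ≤ (c j : ℝ) := by exact_mod_cast hc j (Finset.mem_range.mp hj)
  have : 0 < (c j : ℝ) * ((c j : ℝ) - 1) := by nlinarith
  positivity

lemma lurothDigit_eq_of_mem (a : ℕ) (ha : 2 ≤ a) {x : ℝ}
    (h1 : 1 / (a : ℝ) < x) (h2 : x ≤ 1 / ((a : ℝ) - 1)) : lurothDigit x = a := by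
  have ha2 : (2 : ℝ) ≤ (a : ℝ) := by exact_mod_cast ha
  have ha0 : (0 : ℝ) < (a : ℝ) := by linarith
  have ha1 : (0 : ℝ) < (a : ℝ) - 1 := by linarith
  have hx0 : 0 < x := lt_trans (by positivity) h1
  have hcast : ((a - 1 : ℕ) : ℝ) = (a : ℝ) - 1 := by
    have h1a : 1 ≤ a := by omega
    push_cast [h1a]; ring
  have hfl : ⌊1 / x⌋₊ = a - 1 := by
    rw [Nat.floor_eq_iff (by positivity)]
    constructor
    · rw [hcast, le_div_iff₀ hx0]
      calc ((a : ℝ) - 1) * x ≤ ((a : ℝ) - 1) * (1 / ((a : ℝ) - 1)) :=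
            mul_le_mul_of_nonneg_left h2 ha1.le
        _ = 1 := by field_simp
    · have he : ((a - 1 : ℕ) : ℝ) + 1 = (a : ℝ) := by rw [hcast]; ring
      rw [he, div_lt_iff₀ hx0]
      calc (1 : ℝ) = (a : ℝ) * (1 / (a : ℝ)) := by field_simp
        _ < (a : ℝ) * x := mul_lt_mul_of_pos_left h1 ha0
  unfold lurothDigit
  omega

lemma lurothDigit_mem_cyl {x : ℝ} (hx : x ∈ Set.Ioc (0 : ℝ) 1) :
    2 ≤ lurothDigit x ∧ 1 / (lurothDigit x : ℝ) < x ∧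
      x ≤ 1 / ((lurothDigit x : ℝ) - 1) := by
  obtain ⟨hx0, hx1⟩ := hx
  have hinv : (1 : ℝ) ≤ 1 / x := by rw [le_div_iff₀ hx0]; simpa using hx1
  have hfl1 : 1 ≤ ⌊1 / x⌋₊ := Nat.le_floor (by exact_mod_cast hinv)
  have hd2 : 2 ≤ lurothDigit x := by unfold lurothDigit; omega
  have hcast : ((lurothDigit x : ℕ) : ℝ) - 1 = (⌊1 / x⌋₊ : ℝ) := by
    unfold lurothDigit; push_cast; ring
  refine ⟨hd2, ?_, ?_⟩
  · have h := Nat.lt_floor_add_one (1 / x)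
    have hd : (1 : ℝ) / x < (lurothDigit x : ℝ) := by
      unfold lurothDigit; push_cast; linarith
    have hdx0 : (0 : ℝ) < (lurothDigit x : ℝ) := by
      have : 0 < lurothDigit x := by omega
      exact_mod_cast this
    rw [div_lt_iff₀ hx0] at hd
    rw [div_lt_iff₀ hdx0]
    nlinarith
  · have h := Nat.floor_le (by positivity : (0:ℝ) ≤ 1 / x)
    have hfl0 : (0:ℝ) < (⌊1 / x⌋₊ : ℝ) := by exact_mod_cast hfl1
    rw [hcast, le_div_iff₀ hfl0]
    have := mul_le_mul_of_nonneg_left h hx0.le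
    calc x * (⌊1 / x⌋₊ : ℝ) = x * (⌊1 / x⌋₊ : ℝ) := rfl
      _ ≤ x * (1 / x) := mul_le_mul_of_nonneg_left h hx0.le
      _ = 1 := by field_simp

lemma lurothMap_eq_s11 (a : ℕ) (ha : 2 ≤ a) {x : ℝ}
    (h1 : 1 / (a : ℝ) < x) (h2 : x ≤ 1 / ((a : ℝ) - 1)) :
    lurothMap x = (a : ℝ) * ((a : ℝ) - 1) * x - ((a : ℝ) - 1) := by
  have ha0 : (0 : ℝ) < (a : ℝ) := by
    have : (2:ℝ) ≤ (a:ℝ) := by exact_mod_cast ha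
    linarith
  have hx0 : 0 < x := lt_trans (by positivity) h1
  unfold lurothMap
  rw [if_neg (ne_of_gt hx0), lurothDigit_eq_of_mem a ha h1 h2]

/-- membership in `(0,1]` for the affine image characterizes the cylinder -/
lemma affine_mem_Ioc_iff (a : ℕ) (ha : 2 ≤ a) (x : ℝ) :
    ((a : ℝ) * ((a : ℝ) - 1) * x - ((a : ℝ) - 1) ∈ Set.Ioc (0:ℝ) 1) ↔
      (1 / (a : ℝ) < x ∧ x ≤ 1 / ((a : ℝ) - 1)) := by
  have ha2 : (2 : ℝ) ≤ (a : ℝ) := by exact_mod_cast ha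
  have ha0 : (0 : ℝ) < (a : ℝ) := by linarith
  have ha1 : (0 : ℝ) < (a : ℝ) - 1 := by linarith
  rw [Set.mem_Ioc]
  constructor
  · rintro ⟨hp, hq⟩
    constructor
    · rw [div_lt_iff₀ ha0]
      nlinarith [mul_pos ha1 ha0]
    · rw [le_div_iff₀ ha1]
      nlinarith
  · rintro ⟨hp, hq⟩
    rw [div_lt_iff₀ ha0] at hp
    rw [le_div_iff₀ ha1] at hq
    constructor
    · nlinarith
    · nlinarith

lemma fundamentalInterval_structure (k : ℕ) : ∀ (c : ℕ → ℕ), (∀ j < k, 2 ≤ c j) →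
    fundamentalInterval k c
        = Set.Ioc (lurothFinSum c k) (lurothFinSum c k + lurothProd k c) ∧
      ∀ x ∈ fundamentalInterval k c,
        lurothMap^[k] x = (x - lurothFinSum c k) / lurothProd k c := by
  induction k with
  | zero =>
    intro c _
    constructor
    · ext x
      simp [fundamentalInterval, lurothFinSum, lurothProd]
    · intro x _
      simp [lurothFinSum, lurothProd]
  | succ k ih =>
    intro c hc
    set c' : ℕ → ℕ := fun j => c (j + 1) with hc'def
    have hc' : ∀ j < k, 2 ≤ c' j := fun j hj => hc (j + 1) (by omega)
    obtain ⟨ihset, ihmap⟩ := ih c' hc'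
    set a : ℕ := c 0 with hadef
    have ha : 2 ≤ a := hc 0 (by omega)
    have ha2 : (2 : ℝ) ≤ (a : ℝ) := by exact_mod_cast ha
    have ha0 : (0 : ℝ) < (a : ℝ) := by linarith
    have ha1 : (0 : ℝ) < (a : ℝ) - 1 := by linarith
    set s : ℝ := (a : ℝ) * ((a : ℝ) - 1) with hsdef
    have hs : 0 < s := mul_pos ha0 ha1
    set u' : ℝ := lurothFinSum c' k with hu'def
    set p' : ℝ := lurothProd k c' with hp'def
    have hp' : 0 < p' := lurothProd_pos k c' hc'
    -- sum and product recursions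
    have hsum : lurothFinSum c (k + 1) = 1 / (a : ℝ) + u' / s := by
      unfold lurothFinSum
      rw [Finset.sum_range_succ']
      have h0 : lurothTerm c 0 = 1 / (a : ℝ) := by
        simp [lurothTerm, hadef]
      have hterm : ∀ j, lurothTerm c (j + 1) = lurothTerm c' j / s := by
        intro j
        unfold lurothTerm
        rw [Finset.prod_range_succ']
        have : ∀ i, c (i + 1) = c' i := fun i => rfl
        simp only [this]
        rw [hsdef, hadef]
        ring
      rw [h0]
      simp only [hterm]
      rw [hu'def, lurothFinSum, ← Finset.sum_div]
      ring
    have hprod : lurothProd (k + 1) c = p' / s := by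
      unfold lurothProd
      rw [Finset.prod_range_succ']
      have : ∀ i, c (i + 1) = c' i := fun i => rfl
      simp only [this]
      rw [hp'def, lurothProd, hsdef]
      rw [hadef]; ring
    -- membership characterization
    have hIoc_sub : Set.Ioc u' (u' + p') ⊆ Set.Ioc (0:ℝ) 1 := by
      rw [← ihset]; exact fun x hx => hx.1
    have hmem : ∀ x : ℝ, x ∈ fundamentalInterval (k + 1) c ↔
        s * x - ((a : ℝ) - 1) ∈ Set.Ioc u' (u' + p') := by
      intro x
      constructor
      · rintro ⟨hx01, hdig⟩
        have hd0 : lurothDigit x = a := hdig 0 (by omega)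
        have hcyl := lurothDigit_mem_cyl hx01
        rw [hd0] at hcyl
        obtain ⟨-, hcy1, hcy2⟩ := hcyl
        have hmap := lurothMap_eq_s11 a ha hcy1 hcy2
        have hLmem : lurothMap x ∈ fundamentalInterval k c' := by
          refine ⟨?_, ?_⟩
          · rw [hmap]; exact (affine_mem_Ioc_iff a ha x).mpr ⟨hcy1, hcy2⟩
          · intro j hj
            have := hdig (j + 1) (by omega)
            unfold lurothDigitSeq at this ⊢
            rw [Function.iterate_succ_apply] at this
            exact this
        rw [ihset] at hLmem
        rw [← hmap]; exact hLmem
      · intro hgx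
        have hgx01 : s * x - ((a : ℝ) - 1) ∈ Set.Ioc (0:ℝ) 1 := hIoc_sub hgx
        have hcyl := (affine_mem_Ioc_iff a ha x).mp hgx01
        obtain ⟨hcy1, hcy2⟩ := hcyl
        have hx01 : x ∈ Set.Ioc (0:ℝ) 1 := by
          constructor
          · exact lt_trans (by positivity) hcy1
          · calc x ≤ 1 / ((a:ℝ) - 1) := hcy2
              _ ≤ 1 := by rw [div_le_one ha1]; linarith
        have hd0 : lurothDigit x = a := lurothDigit_eq_of_mem a ha hcy1 hcy2
        have hmap := lurothMap_eq_s11 a ha hcy1 hcy2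
        have hLmem : lurothMap x ∈ fundamentalInterval k c' := by
          rw [ihset, hmap]; exact hgx
        refine ⟨hx01, ?_⟩
        intro j hj
        rcases Nat.eq_zero_or_pos j with rfl | hj0
        · exact hd0
        · obtain ⟨i, rfl⟩ := Nat.exists_eq_succ_of_ne_zero (by omega : j ≠ 0)
          have := hLmem.2 i (by omega)
          unfold lurothDigitSeq at this ⊢
          rw [Function.iterate_succ_apply]
          exact this
    constructor
    · ext x
      rw [hmem x, hsum, hprod, Set.mem_Ioc, Set.mem_Ioc]
      constructor
      · rintro ⟨h1, h2⟩
        constructor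
        · rw [show (1:ℝ)/(a:ℝ) + u'/s = (u' + ((a:ℝ)-1))/s by
            rw [hsdef]; field_simp; ring]
          rw [div_lt_iff₀ hs]; linarith [mul_comm x s]
        · rw [show (1:ℝ)/(a:ℝ) + u'/s + p'/s = (u' + p' + ((a:ℝ)-1))/s by
            rw [hsdef]; field_simp; ring]
          rw [le_div_iff₀ hs]; linarith [mul_comm x s]
      · rintro ⟨h1, h2⟩
        rw [show (1:ℝ)/(a:ℝ) + u'/s = (u' + ((a:ℝ)-1))/s by
            rw [hsdef]; field_simp; ring] at h1
        rw [show (1:ℝ)/(a:ℝ) + u'/s + p'/s = (u' + p' + ((a:ℝ)-1))/s by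
            rw [hsdef]; field_simp; ring] at h2
        rw [div_lt_iff₀ hs] at h1
        rw [le_div_iff₀ hs] at h2
        constructor
        · linarith [mul_comm x s]
        · linarith [mul_comm x s]
    · intro x hx
      have hx' := hx
      obtain ⟨hx01, hdig⟩ := hx'
      have hd0 : lurothDigit x = a := hdig 0 (by omega)
      have hcyl := lurothDigit_mem_cyl hx01
      rw [hd0] at hcyl
      obtain ⟨-, hcy1, hcy2⟩ := hcyl
      have hmap := lurothMap_eq_s11 a ha hcy1 hcy2
      have hgx : s * x - ((a : ℝ) - 1) ∈ Set.Ioc u' (u' + p') := (hmem x).mp hx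
      have hLmem : lurothMap x ∈ fundamentalInterval k c' := by
        rw [ihset, hmap]; exact hgx
      rw [Function.iterate_succ_apply, ihmap _ hLmem, hmap, hsum, hprod]
      rw [eq_div_iff (by positivity : p'/s ≠ 0)]
      field_simp
      ring

lemma measurable_lurothMap : Measurable lurothMap := by
  have hd : Measurable fun x : ℝ => ((lurothDigit x : ℕ) : ℝ) := by
    unfold lurothDigit
    exact measurable_from_top.comp
      ((Measurable.nat_floor (measurable_const.div measurable_id)).add measurable_const)
  unfold lurothMap
  apply Measurable.ite
  · simpa [Set.setOf_eq_eq_singleton] using (measurableSet_singleton (0:ℝ))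
  · exact measurable_const
  · exact ((hd.mul (hd.sub measurable_const)).mul measurable_id).sub
      (hd.sub measurable_const)

lemma volume_preimage_affine {s : ℝ} (hs : 0 < s) (t : ℝ) (S : Set ℝ) :
    volume ((fun x => s * x + t) ⁻¹' S) = ENNReal.ofReal s⁻¹ * volume S := by
  have h : (fun x : ℝ => s * x + t) ⁻¹' S = (s * ·) ⁻¹' ((· + t) ⁻¹' S) := rfl
  rw [h, Real.volume_preimage_mul_left (ne_of_gt hs), measure_preimage_add_right,
    abs_of_pos (inv_pos.2 hs)]

lemma tsum_telescope : ∑' i : ℕ, ENNReal.ofReal (1 / (((i:ℝ) + 2) * ((i:ℝ) + 1))) = 1 := by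
  have hnn : ∀ i : ℕ, (0:ℝ) ≤ 1 / (((i:ℝ) + 2) * ((i:ℝ) + 1)) := by
    intro i; positivity
  have hpart : ∀ N : ℕ, ∑ i ∈ Finset.range N, 1 / (((i:ℝ) + 2) * ((i:ℝ) + 1))
      = 1 - 1 / ((N:ℝ) + 1) := by
    intro N
    induction N with
    | zero => simp
    | succ N ihN =>
      rw [Finset.sum_range_succ, ihN]
      push_cast
      have h1 : ((N:ℝ) + 1) ≠ 0 := by positivity
      have h2 : ((N:ℝ) + 2) ≠ 0 := by positivity
      field_simp
      ring
  have hHasSum : HasSum (fun i : ℕ => 1 / (((i:ℝ) + 2) * ((i:ℝ) + 1))) 1 := by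
    rw [hasSum_iff_tendsto_nat_of_nonneg hnn]
    simp only [hpart]
    have := (tendsto_one_div_add_atTop_nhds_zero_nat :
      Filter.Tendsto (fun n : ℕ => 1 / ((n : ℝ) + 1)) Filter.atTop (nhds 0))
    have h := Filter.Tendsto.const_sub (1:ℝ) this
    simpa using h
  rw [← ENNReal.ofReal_tsum_of_nonneg hnn hHasSum.summable, hHasSum.tsum_eq,
    ENNReal.ofReal_one]

lemma volume_preimage_lurothMap_inter (B : Set ℝ) (hB : MeasurableSet B) :
    volume (lurothMap ⁻¹' B ∩ Set.Ioc (0:ℝ) 1) = volume (B ∩ Set.Ioc (0:ℝ) 1) := by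
  -- the cylinders
  set f : ℕ → Set ℝ := fun i =>
    lurothMap ⁻¹' B ∩ Set.Ioc (1 / ((i:ℝ) + 2)) (1 / ((i:ℝ) + 1)) with hfdef
  have hcover : lurothMap ⁻¹' B ∩ Set.Ioc (0:ℝ) 1 = ⋃ i : ℕ, f i := by
    ext x
    simp only [Set.mem_inter_iff, Set.mem_iUnion, hfdef, Set.mem_preimage]
    constructor
    · rintro ⟨hxB, hx01⟩
      obtain ⟨hd2, hcy1, hcy2⟩ := lurothDigit_mem_cyl hx01
      refine ⟨lurothDigit x - 2, hxB, ?_, ?_⟩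
      · have : ((lurothDigit x - 2 : ℕ) : ℝ) + 2 = (lurothDigit x : ℝ) := by
          have : 2 ≤ lurothDigit x := hd2
          push_cast [this]; ring
        rw [this]; exact hcy1
      · have : ((lurothDigit x - 2 : ℕ) : ℝ) + 1 = (lurothDigit x : ℝ) - 1 := by
          have : 2 ≤ lurothDigit x := hd2
          push_cast [this]; ring
        rw [this]; exact hcy2
    · rintro ⟨i, hxB, h1, h2⟩
      refine ⟨hxB, ?_, ?_⟩
      · exact lt_trans (by positivity) h1
      · calc x ≤ 1 / ((i:ℝ) + 1) := h2
          _ ≤ 1 := by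
            have hi0 : (0:ℝ) ≤ (i:ℝ) := Nat.cast_nonneg i
            rw [div_le_one (by positivity)]; linarith
  have hdisj : Pairwise (Function.onFun Disjoint f) := by
    intro i j hij
    have key : ∀ i j : ℕ, i < j → Disjoint (f i) (f j) := by
      intro i j hlt
      apply Set.disjoint_of_subset Set.inter_subset_right Set.inter_subset_right
      rw [Set.Ioc_disjoint_Ioc]
      have h1 : (1:ℝ) / ((j:ℝ) + 1) ≤ 1 / ((i:ℝ) + 2) := by
        apply one_div_le_one_div_of_le (by positivity)
        have : (i:ℝ) + 1 ≤ (j:ℝ) := by exact_mod_cast hlt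
        linarith
      calc min (1 / ((i:ℝ) + 1)) (1 / ((j:ℝ) + 1)) ≤ 1 / ((j:ℝ) + 1) :=
            min_le_right _ _
        _ ≤ 1 / ((i:ℝ) + 2) := h1
        _ ≤ max (1 / ((i:ℝ) + 2)) (1 / ((j:ℝ) + 2)) := le_max_left _ _
    rcases lt_or_gt_of_ne hij with h | h
    · exact key i j h
    · exact (key j i h).symm
  have hmeas : ∀ i : ℕ, MeasurableSet (f i) :=
    fun i => (measurable_lurothMap hB).inter measurableSet_Ioc
  have hcylvol : ∀ i : ℕ, volume (f i)
      = ENNReal.ofReal (1 / (((i:ℝ) + 2) * ((i:ℝ) + 1))) * volume (B ∩ Set.Ioc (0:ℝ) 1) := by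
    intro i
    set a : ℕ := i + 2 with hadef
    have ha : 2 ≤ a := by omega
    have hacast2 : ((a:ℝ)) = (i:ℝ) + 2 := by push_cast [hadef]; ring
    have hacast1 : ((a:ℝ)) - 1 = (i:ℝ) + 1 := by push_cast [hadef]; ring
    have hset : f i = (fun x => ((a:ℝ) * ((a:ℝ) - 1)) * x + (-((a:ℝ) - 1))) ⁻¹'
        (B ∩ Set.Ioc (0:ℝ) 1) := by
      rw [hfdef]
      ext x
      simp only [Set.mem_inter_iff, Set.mem_preimage, Set.mem_Ioc]
      constructor
      · rintro ⟨hxB, h1, h2⟩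
        rw [← hacast2] at h1
        rw [← hacast1] at h2
        have hmape := lurothMap_eq_s11 a ha h1 h2
        have hIoc := (affine_mem_Ioc_iff a ha x).mpr ⟨h1, h2⟩
        constructor
        · rw [show (a:ℝ) * ((a:ℝ) - 1) * x + -((a:ℝ) - 1)
              = (a:ℝ) * ((a:ℝ) - 1) * x - ((a:ℝ) - 1) by ring, ← hmape]
          exact hxB
        · rw [show (a:ℝ) * ((a:ℝ) - 1) * x + -((a:ℝ) - 1)
              = (a:ℝ) * ((a:ℝ) - 1) * x - ((a:ℝ) - 1) by ring]
          exact hIoc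
      · rintro ⟨hxB, hIoc⟩
        rw [show (a:ℝ) * ((a:ℝ) - 1) * x + -((a:ℝ) - 1)
            = (a:ℝ) * ((a:ℝ) - 1) * x - ((a:ℝ) - 1) by ring] at hxB hIoc
        have hcyl := (affine_mem_Ioc_iff a ha x).mp hIoc
        obtain ⟨h1, h2⟩ := hcyl
        have hmape := lurothMap_eq_s11 a ha h1 h2
        rw [hacast2] at h1
        rw [hacast1] at h2
        exact ⟨by rw [hmape]; exact hxB, h1, h2⟩
    have hs : (0:ℝ) < (a:ℝ) * ((a:ℝ) - 1) := by
      rw [hacast1, hacast2]; positivity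
    rw [hset, volume_preimage_affine hs]
    congr 1
    rw [hacast1, hacast2, one_div]
  rw [hcover, measure_iUnion hdisj hmeas]
  simp only [hcylvol]
  rw [ENNReal.tsum_mul_right, tsum_telescope, one_mul]

lemma volume_preimage_iterate_inter (m : ℕ) (B : Set ℝ) (hB : MeasurableSet B) :
    volume (lurothMap^[m] ⁻¹' B ∩ Set.Ioc (0:ℝ) 1) = volume (B ∩ Set.Ioc (0:ℝ) 1) := by
  induction m with
  | zero => simp
  | succ m ihm =>
    rw [Function.iterate_succ]
    have h : (lurothMap^[m] ∘ lurothMap) ⁻¹' B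
        = lurothMap ⁻¹' (lurothMap^[m] ⁻¹' B) := rfl
    rw [h, volume_preimage_lurothMap_inter _ ((measurable_lurothMap.iterate m) hB), ihm]

/-- For a fundamental interval `I_k` of level `k`, any interval
`(α,β] ⊆ (0,1]` and any `n ≥ k`, `m(L⁻ⁿ((α,β]) ∩ I_k) = m((α,β]) · m(I_k)`. -/
theorem volume_preimage_inter_fundamentalInterval (k : ℕ) (c : ℕ → ℕ)
    (hc : ∀ j < k, 2 ≤ c j) (α β : ℝ) (hab : Set.Ioc α β ⊆ Set.Ioc (0 : ℝ) 1)
    (n : ℕ) (hn : k ≤ n) :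
    MeasureTheory.volume (lurothMap^[n] ⁻¹' Set.Ioc α β ∩ fundamentalInterval k c)
      = MeasureTheory.volume (Set.Ioc α β) *
          MeasureTheory.volume (fundamentalInterval k c) := by
  obtain ⟨hset, hmap⟩ := fundamentalInterval_structure k c hc
  set u : ℝ := lurothFinSum c k with hudef
  set p : ℝ := lurothProd k c with hpdef
  have hp : 0 < p := lurothProd_pos k c hc
  set m : ℕ := n - k with hmdef
  have hmk : m + k = n := Nat.sub_add_cancel hn
  -- set identity
  have hkey : lurothMap^[n] ⁻¹' Set.Ioc α β ∩ fundamentalInterval k c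
      = (fun x => p⁻¹ * x + (-(u / p))) ⁻¹'
          (lurothMap^[m] ⁻¹' Set.Ioc α β ∩ Set.Ioc (0:ℝ) 1) := by
    ext x
    simp only [Set.mem_inter_iff, Set.mem_preimage]
    have haff : p⁻¹ * x + (-(u / p)) = (x - u) / p := by field_simp; ring
    have hIocmem : (x - u) / p ∈ Set.Ioc (0:ℝ) 1 ↔ x ∈ Set.Ioc u (u + p) := by
      rw [Set.mem_Ioc, Set.mem_Ioc, div_le_one hp]
      constructor
      · rintro ⟨h1, h2⟩
        have hcancel : (x - u) / p * p = x - u := div_mul_cancel₀ _ hp.ne'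
        have := mul_pos h1 hp
        exact ⟨by linarith, by linarith⟩
      · rintro ⟨h1, h2⟩
        exact ⟨div_pos (by linarith) hp, by linarith⟩
    constructor
    · rintro ⟨hxn, hxI⟩
      have hxIoc : x ∈ Set.Ioc u (u + p) := by rw [← hset]; exact hxI
      have hLk : lurothMap^[k] x = (x - u) / p := hmap x hxI
      rw [haff]
      constructor
      · rw [← hLk, ← Function.iterate_add_apply, hmk]
        exact hxn
      · exact hIocmem.mpr hxIoc
    · rintro ⟨hxm, hx01⟩
      rw [haff] at hxm hx01
      have hxIoc : x ∈ Set.Ioc u (u + p) := hIocmem.mp hx01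
      have hxI : x ∈ fundamentalInterval k c := by rw [hset]; exact hxIoc
      have hLk : lurothMap^[k] x = (x - u) / p := hmap x hxI
      refine ⟨?_, hxI⟩
      rw [← hmk, Function.iterate_add_apply, hLk]
      exact hxm
  have hpinv : (0:ℝ) < p⁻¹ := inv_pos.2 hp
  rw [hkey, volume_preimage_affine hpinv, inv_inv,
    volume_preimage_iterate_inter m _ measurableSet_Ioc,
    Set.inter_eq_self_of_subset_left hab, hset]
  simp only [Real.volume_Ioc]
  rw [add_sub_cancel_left, mul_comm]
end

section
/- Let E ≥ 6, m ≥ 2 be integers and c = (c₁,...,c_m) be Lüroth digits (each ≥ 2). If b = (b₁,...,b_{m-1}, e) has all entries in [2,E], with 3 ≤ e ≤ E-1 and |c_m - e| ≥ 2, then the distance between the fundamental intervals I_m(c) and I_m(b) is at least E^{-2m}. -/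
private lemma digit_two_le {x : ℝ} (h0 : 0 < x) (h1 : x ≤ 1) : 2 ≤ lurothDigit x := by
  have h : (1:ℝ) ≤ 1 / x := by
    rw [le_div_iff₀ h0]; linarith
  have h2 : 1 ≤ ⌊(1:ℝ) / x⌋₊ := Nat.le_floor (by exact_mod_cast h)
  unfold lurothDigit
  omega

private lemma digit_bounds {x : ℝ} (h0 : 0 < x) (h1 : x ≤ 1) :
    1 < (lurothDigit x : ℝ) * x ∧ ((lurothDigit x : ℝ) - 1) * x ≤ 1 := by
  have hfl : (⌊(1:ℝ)/x⌋₊ : ℝ) ≤ 1/x := Nat.floor_le (by positivity)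
  have hfu : 1/x < (⌊(1:ℝ)/x⌋₊ : ℝ) + 1 := Nat.lt_floor_add_one _
  have hcast : (lurothDigit x : ℝ) = (⌊(1:ℝ)/x⌋₊ : ℝ) + 1 := by
    unfold lurothDigit; push_cast; ring
  have hxx : (1/x) * x = 1 := by field_simp
  constructor
  · rw [hcast]
    nlinarith [mul_lt_mul_of_pos_right hfu h0]
  · rw [hcast]
    nlinarith [mul_le_mul_of_nonneg_right hfl h0.le]

private lemma map_mem {x : ℝ} (h0 : 0 < x) (h1 : x ≤ 1) :
    0 < lurothMap x ∧ lurothMap x ≤ 1 := by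
  obtain ⟨hl, hr⟩ := digit_bounds h0 h1
  have h2 : (2:ℝ) ≤ (lurothDigit x : ℝ) := by exact_mod_cast digit_two_le h0 h1
  rw [lurothMap, if_neg (ne_of_gt h0)]
  constructor
  · nlinarith [mul_pos (show (0:ℝ) < (lurothDigit x:ℝ) - 1 by linarith)
      (show (0:ℝ) < (lurothDigit x:ℝ)*x - 1 by linarith)]
  · nlinarith [mul_le_mul_of_nonneg_left hr (show (0:ℝ) ≤ (lurothDigit x:ℝ) by linarith)]

private lemma map_identity {x : ℝ} (h0 : 0 < x) (h1 : x ≤ 1) :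
    x = 1 / (lurothDigit x : ℝ)
      + 1 / ((lurothDigit x : ℝ) * ((lurothDigit x : ℝ) - 1)) * lurothMap x := by
  have h2 : (2:ℝ) ≤ (lurothDigit x : ℝ) := by exact_mod_cast digit_two_le h0 h1
  have hA : (lurothDigit x : ℝ) ≠ 0 := by linarith
  have hA1 : (lurothDigit x : ℝ) - 1 ≠ 0 := by linarith
  rw [lurothMap, if_neg (ne_of_gt h0)]
  field_simp
  ring

private lemma iterate_mem {x : ℝ} (h0 : 0 < x) (h1 : x ≤ 1) (n : ℕ) :
    0 < lurothMap^[n] x ∧ lurothMap^[n] x ≤ 1 := by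
  induction n with
  | zero => exact ⟨h0, h1⟩
  | succ n ih =>
      rw [Function.iterate_succ_apply']
      exact map_mem ih.1 ih.2

private lemma digitSeq_two_le {x : ℝ} (h0 : 0 < x) (h1 : x ≤ 1) (n : ℕ) :
    2 ≤ lurothDigitSeq x n :=
  digit_two_le (iterate_mem h0 h1 n).1 (iterate_mem h0 h1 n).2

private lemma digitSeq_shift (x : ℝ) (j i : ℕ) :
    lurothDigitSeq (lurothMap^[j] x) i = lurothDigitSeq x (j + i) := by
  unfold lurothDigitSeq
  rw [← Function.iterate_add_apply, Nat.add_comm i j]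

private lemma expand {x : ℝ} (h0 : 0 < x) (h1 : x ≤ 1) (n : ℕ) :
    x = lurothFinSum (lurothDigitSeq x) n
      + (∏ i ∈ Finset.range n, (1:ℝ) / ((lurothDigitSeq x i : ℝ) * ((lurothDigitSeq x i : ℝ) - 1)))
        * lurothMap^[n] x := by
  induction n with
  | zero => simp [lurothFinSum]
  | succ n ih =>
      obtain ⟨hw0, hw1⟩ := iterate_mem h0 h1 n
      have hid : lurothMap^[n] x = 1/(lurothDigitSeq x n : ℝ)
          + 1/((lurothDigitSeq x n : ℝ) * ((lurothDigitSeq x n : ℝ) - 1))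
            * lurothMap (lurothMap^[n] x) := map_identity hw0 hw1
      simp only [lurothFinSum, Finset.sum_range_succ, Finset.prod_range_succ, lurothTerm,
        Function.iterate_succ_apply'] at *
      linear_combination ih + (∏ i ∈ Finset.range n,
        (1:ℝ) / ((lurothDigitSeq x i : ℝ) * ((lurothDigitSeq x i : ℝ) - 1))) * hid

private lemma prod_pos' (d : ℕ → ℕ) (hd : ∀ j, 2 ≤ d j) (n : ℕ) :
    0 < ∏ i ∈ Finset.range n, (1:ℝ) / ((d i : ℝ) * ((d i : ℝ) - 1)) := by
  apply Finset.prod_pos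
  intro i _
  have h2 : (2:ℝ) ≤ (d i : ℝ) := by exact_mod_cast hd i
  apply div_pos one_pos
  nlinarith

private lemma F_le_one (d : ℕ → ℕ) (hd : ∀ j, 2 ≤ d j) (n : ℕ) :
    lurothFinSum d n + ∏ i ∈ Finset.range n, (1:ℝ)/((d i:ℝ)*((d i:ℝ)-1)) ≤ 1 := by
  induction n with
  | zero => simp [lurothFinSum]
  | succ n ih =>
      have hP := prod_pos' d hd n
      have h2 : (2:ℝ) ≤ (d n : ℝ) := by exact_mod_cast hd n
      have hne : (d n:ℝ) ≠ 0 := by linarith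
      have hne1 : (d n:ℝ) - 1 ≠ 0 := by linarith
      have key : (1:ℝ)/(d n:ℝ) + 1/((d n:ℝ)*((d n:ℝ)-1)) = 1/((d n:ℝ)-1) := by
        field_simp
        ring
      have h3 : (1:ℝ)/((d n:ℝ)-1) ≤ 1 := by
        rw [div_le_one (by linarith)]; linarith
      simp only [lurothFinSum, Finset.sum_range_succ, Finset.prod_range_succ, lurothTerm] at *
      set Q := ∏ i ∈ Finset.range n, (1:ℝ)/((d i:ℝ)*((d i:ℝ)-1)) with hQ
      have hkey2 : Q*(1/(d n:ℝ)) + Q*(1/((d n:ℝ)*((d n:ℝ)-1))) = Q*(1/((d n:ℝ)-1)) := by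
        rw [← mul_add, key]
      nlinarith [mul_le_mul_of_nonneg_left h3 hP.le]

private lemma F_gap (d : ℕ → ℕ) (hd : ∀ j, 2 ≤ d j) (n : ℕ) :
    (∏ i ∈ Finset.range n, (1:ℝ)/((d i:ℝ)*((d i:ℝ)-1))) * (1 - 1/((d n:ℝ)-1))
      ≤ 1 - (lurothFinSum d (n+1) + ∏ i ∈ Finset.range (n+1), (1:ℝ)/((d i:ℝ)*((d i:ℝ)-1))) := by
  have ih := F_le_one d hd n
  have hP := prod_pos' d hd n
  have h2 : (2:ℝ) ≤ (d n : ℝ) := by exact_mod_cast hd n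
  have hne : (d n:ℝ) ≠ 0 := by linarith
  have hne1 : (d n:ℝ) - 1 ≠ 0 := by linarith
  have key : (1:ℝ)/(d n:ℝ) + 1/((d n:ℝ)*((d n:ℝ)-1)) = 1/((d n:ℝ)-1) := by
    field_simp
    ring
  simp only [lurothFinSum, Finset.sum_range_succ, Finset.prod_range_succ, lurothTerm] at *
  set Q := ∏ i ∈ Finset.range n, (1:ℝ)/((d i:ℝ)*((d i:ℝ)-1)) with hQ
  have hkey2 : Q*(1/(d n:ℝ)) + Q*(1/((d n:ℝ)*((d n:ℝ)-1))) = Q*(1/((d n:ℝ)-1)) := by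
    rw [← mul_add, key]
  linarith [hkey2]

private lemma val_le_F {x : ℝ} (h0 : 0 < x) (h1 : x ≤ 1) (n : ℕ) :
    x ≤ lurothFinSum (lurothDigitSeq x) n
      + ∏ i ∈ Finset.range n, (1:ℝ)/((lurothDigitSeq x i:ℝ)*((lurothDigitSeq x i:ℝ)-1)) := by
  have he := expand h0 h1 n
  have hP := prod_pos' _ (digitSeq_two_le h0 h1) n
  have hT := (iterate_mem h0 h1 n).2
  nlinarith [mul_le_mul_of_nonneg_left hT hP.le]

private lemma prod_ge (E : ℕ) (hE : 1 ≤ E) (d : ℕ → ℕ) (n : ℕ)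
    (hd : ∀ i < n, 2 ≤ d i ∧ d i ≤ E) :
    1 / (E:ℝ)^(2*n) ≤ ∏ i ∈ Finset.range n, (1:ℝ)/((d i:ℝ)*((d i:ℝ)-1)) := by
  have hEr : (1:ℝ) ≤ (E:ℝ) := by exact_mod_cast hE
  have h1 : (1:ℝ)/(E:ℝ)^(2*n) = ∏ _i ∈ Finset.range n, (1:ℝ)/(E:ℝ)^2 := by
    rw [Finset.prod_const, Finset.card_range, one_div_pow, ← pow_mul]
  rw [h1]
  apply Finset.prod_le_prod
  · intro i _; positivity
  · intro i hi
    obtain ⟨h2, h3⟩ := hd i (Finset.mem_range.mp hi)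
    have h2' : (2:ℝ) ≤ (d i:ℝ) := by exact_mod_cast h2
    have h3' : (d i:ℝ) ≤ (E:ℝ) := by exact_mod_cast h3
    apply one_div_le_one_div_of_le
    · nlinarith
    · nlinarith

private lemma arith1 (Er A B u v : ℝ) (hE : 6 ≤ Er) (hB : 2 ≤ B) (hBE1 : B + 1 ≤ Er)
    (hAB : B + 2 ≤ A) (hu : (A - 1) * u ≤ 1) (hu0 : 0 < u) (hv : 1 < B * v) :
    1 / Er ^ 2 ≤ v - u := by
  have h1 : (B + 1) * u ≤ 1 := by nlinarith
  have h2 : 1 < B * (B + 1) * (v - u) := by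
    nlinarith [mul_lt_mul_of_pos_left hv (show (0:ℝ) < B + 1 by linarith),
      mul_le_mul_of_nonneg_left h1 (show (0:ℝ) ≤ B by linarith)]
  have h3 : (0:ℝ) < B * (B + 1) := by nlinarith
  have h4 : B * (B + 1) ≤ Er ^ 2 := by nlinarith
  have hvu : 0 < v - u := by
    by_contra hcon
    push_neg at hcon
    nlinarith [mul_nonpos_of_nonneg_of_nonpos h3.le hcon]
  rw [div_le_iff₀ (by positivity)]
  nlinarith [mul_le_mul_of_nonneg_left h4 hvu.le]

private lemma arith2 (Er A B u v : ℝ) (hE : 6 ≤ Er) (hA : 2 ≤ A) (hAE : A + 3 ≤ Er)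
    (hAB : A + 2 ≤ B) (hv : (B - 1) * v ≤ 1) (hv0 : 0 < v) (hu : 1 < A * u) :
    1 / Er ^ 2 ≤ u - v := by
  have h1 : (A + 1) * v ≤ 1 := by nlinarith
  have h2 : 1 < A * (A + 1) * (u - v) := by
    nlinarith [mul_lt_mul_of_pos_left hu (show (0:ℝ) < A + 1 by linarith),
      mul_le_mul_of_nonneg_left h1 (show (0:ℝ) ≤ A by linarith)]
  have h3 : (0:ℝ) < A * (A + 1) := by nlinarith
  have h4 : A * (A + 1) ≤ Er ^ 2 := by nlinarith
  have hvu : 0 < u - v := by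
    by_contra hcon
    push_neg at hcon
    nlinarith [mul_nonpos_of_nonneg_of_nonpos h3.le hcon]
  rw [div_le_iff₀ (by positivity)]
  nlinarith [mul_le_mul_of_nonneg_left h4 hvu.le]

private lemma arith3 (Er A B C u v w : ℝ) (hE : 6 ≤ Er) (hB : 2 ≤ B) (hBE : B ≤ Er)
    (hBA : B + 1 ≤ A) (hu : (A - 1) * u ≤ 1) (hu0 : 0 < u)
    (hvid : v = 1 / B + 1 / (B * (B - 1)) * w) (hC : 1 < C * w) (hCE : C ≤ Er)
    (hw0 : 0 < w) : 1 / Er ^ 3 ≤ v - u := by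
  have hBpos : (0:ℝ) < B * (B - 1) := by nlinarith
  have hgpos : (0:ℝ) < 1 / (B * (B - 1)) := one_div_pos.mpr hBpos
  have hule : u ≤ 1 / B := by
    rw [le_div_iff₀ (by linarith : (0:ℝ) < B)]
    nlinarith
  have h2 : 1 / (B * (B - 1)) * w ≤ v - u := by
    rw [hvid]
    nlinarith [mul_le_mul_of_nonneg_left hw0.le hgpos.le]
  have hwge : 1 / Er ≤ w := by
    rw [div_le_iff₀ (by linarith : (0:ℝ) < Er)]
    nlinarith
  have hg : 1 / Er ^ 2 ≤ 1 / (B * (B - 1)) := by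
    apply one_div_le_one_div_of_le hBpos
    nlinarith
  calc 1 / Er ^ 3 = 1 / Er ^ 2 * (1 / Er) := by
        rw [div_mul_div_comm, one_mul, ← pow_succ]
    _ ≤ 1 / (B * (B - 1)) * w :=
        mul_le_mul hg hwge (by positivity) hgpos.le
    _ ≤ v - u := h2

private lemma arith4 (Er A B u v w W : ℝ) (hE : 6 ≤ Er) (hB : 2 ≤ B) (hBE : B ≤ Er)
    (hA : 2 ≤ A) (hAB : A + 1 ≤ B) (hu : 1 < A * u) (hu0 : 0 < u)
    (hvid : v = 1 / B + 1 / (B * (B - 1)) * w) (hW : w ≤ 1 - W) (hW0 : 0 ≤ W) :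
    1 / Er ^ 2 * W ≤ u - v := by
  have hBpos : (0:ℝ) < B * (B - 1) := by nlinarith
  have hgpos : (0:ℝ) < 1 / (B * (B - 1)) := one_div_pos.mpr hBpos
  have hu2 : 1 / (B - 1) < u := by
    rw [div_lt_iff₀ (by linarith : (0:ℝ) < B - 1)]
    nlinarith
  have hfrac : 1 / (B - 1) - 1 / B = 1 / (B * (B - 1)) := by
    rw [div_sub_div _ _ (by linarith : (B:ℝ) - 1 ≠ 0) (by linarith : (B:ℝ) ≠ 0)]
    congr 1
    · ring
    · ring
  have h2 : 1 / (B * (B - 1)) * (1 - w) ≤ u - v := by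
    rw [hvid]
    nlinarith [hu2, hfrac]
  have hg : 1 / Er ^ 2 ≤ 1 / (B * (B - 1)) := by
    apply one_div_le_one_div_of_le hBpos
    nlinarith
  calc 1 / Er ^ 2 * W ≤ 1 / (B * (B - 1)) * (1 - w) :=
        mul_le_mul hg (by linarith) hW0 hgpos.le
    _ ≤ u - v := h2

set_option maxHeartbeats 800000 in
/-- Separation of fundamental intervals: under the stated digit
conditions, the distance between `I_m(c)` and `I_m(b)` is at least `E^{-2m}`. -/
theorem fundamentalInterval_separation (E m : ℕ) (hE : 6 ≤ E) (hm : 2 ≤ m)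
    (c b : ℕ → ℕ) (hc : ∀ j < m, 2 ≤ c j)
    (hb : ∀ j < m, 2 ≤ b j ∧ b j ≤ E)
    (he1 : 3 ≤ b (m - 1)) (he2 : b (m - 1) ≤ E - 1)
    (he3 : 2 ≤ |(c (m - 1) : ℤ) - (b (m - 1) : ℤ)|) :
    ∀ y ∈ fundamentalInterval m c, ∀ z ∈ fundamentalInterval m b,
      1 / (E : ℝ) ^ (2 * m) ≤ |y - z| := by
  classical
  intro y hy z hz
  obtain ⟨⟨hy0, hy1⟩, hyd⟩ := hy
  obtain ⟨⟨hz0, hz1⟩, hzd⟩ := hz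
  have hEr : (6:ℝ) ≤ (E:ℝ) := by exact_mod_cast hE
  have hne : c (m-1) ≠ b (m-1) := by
    intro h; rw [h] at he3; simp at he3
  have hex : ∃ j, c j ≠ b j := ⟨m-1, hne⟩
  obtain ⟨j, hjne, hjmin⟩ : ∃ j, c j ≠ b j ∧ ∀ i < j, ¬(c i ≠ b i) :=
    ⟨Nat.find hex, Nat.find_spec hex, fun i hi => Nat.find_min hex hi⟩
  have hjle : j ≤ m - 1 := by
    by_contra hcon
    exact hjmin (m-1) (by omega) hne
  have hjlt : j < m := by omega
  have hagree : ∀ i < j, c i = b i := fun i hi => by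
    have := hjmin i hi
    tauto
  set u := lurothMap^[j] y with hudef
  set v := lurothMap^[j] z with hvdef
  obtain ⟨hu0, hu1⟩ := iterate_mem hy0 hy1 j
  obtain ⟨hv0, hv1⟩ := iterate_mem hz0 hz1 j
  rw [← hudef] at hu0 hu1
  rw [← hvdef] at hv0 hv1
  set A := c j with hAdef
  set B := b j with hBdef
  have hA2 : 2 ≤ A := hc j hjlt
  have hB2 : 2 ≤ B := (hb j hjlt).1
  have hBE : B ≤ E := (hb j hjlt).2
  have hduA : lurothDigit u = A := hyd j hjlt
  have hdvB : lurothDigit v = B := hzd j hjlt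
  have hAr : (2:ℝ) ≤ (A:ℝ) := by exact_mod_cast hA2
  have hBr : (2:ℝ) ≤ (B:ℝ) := by exact_mod_cast hB2
  have hBEr : (B:ℝ) ≤ (E:ℝ) := by exact_mod_cast hBE
  obtain ⟨huA, huA'⟩ := digit_bounds hu0 hu1
  rw [hduA] at huA huA'
  obtain ⟨hvB, hvB'⟩ := digit_bounds hv0 hv1
  rw [hdvB] at hvB hvB'
  -- common prefix
  have h1d : ∀ i, i < j → lurothDigitSeq y i = b i := fun i hi => by
    rw [hyd i (by omega)]; exact hagree i hi
  have h2d : ∀ i, i < j → lurothDigitSeq z i = b i := fun i hi => hzd i (by omega)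
  set P := ∏ i ∈ Finset.range j, (1:ℝ)/((b i:ℝ)*((b i:ℝ)-1)) with hPdef
  have hyz : y - z = P * (u - v) := by
    have hey := expand hy0 hy1 j
    have hez := expand hz0 hz1 j
    have hPy : (∏ i ∈ Finset.range j,
        (1:ℝ)/((lurothDigitSeq y i:ℝ)*((lurothDigitSeq y i:ℝ)-1))) = P :=
      Finset.prod_congr rfl fun i hi => by rw [h1d i (Finset.mem_range.mp hi)]
    have hPz : (∏ i ∈ Finset.range j,
        (1:ℝ)/((lurothDigitSeq z i:ℝ)*((lurothDigitSeq z i:ℝ)-1))) = P :=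
      Finset.prod_congr rfl fun i hi => by rw [h2d i (Finset.mem_range.mp hi)]
    have hSy : lurothFinSum (lurothDigitSeq y) j = lurothFinSum b j := by
      unfold lurothFinSum lurothTerm
      refine Finset.sum_congr rfl fun k hk => ?_
      have hk' := Finset.mem_range.mp hk
      have hpr : (∏ i ∈ Finset.range k,
          (1:ℝ)/((lurothDigitSeq y i:ℝ)*((lurothDigitSeq y i:ℝ)-1)))
          = ∏ i ∈ Finset.range k, (1:ℝ)/((b i:ℝ)*((b i:ℝ)-1)) :=
        Finset.prod_congr rfl fun i hi => by
          rw [h1d i (by have := Finset.mem_range.mp hi; omega)]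
      rw [hpr, h1d k hk']
    have hSz : lurothFinSum (lurothDigitSeq z) j = lurothFinSum b j := by
      unfold lurothFinSum lurothTerm
      refine Finset.sum_congr rfl fun k hk => ?_
      have hk' := Finset.mem_range.mp hk
      have hpr : (∏ i ∈ Finset.range k,
          (1:ℝ)/((lurothDigitSeq z i:ℝ)*((lurothDigitSeq z i:ℝ)-1)))
          = ∏ i ∈ Finset.range k, (1:ℝ)/((b i:ℝ)*((b i:ℝ)-1)) :=
        Finset.prod_congr rfl fun i hi => by
          rw [h2d i (by have := Finset.mem_range.mp hi; omega)]
      rw [hpr, h2d k hk']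
    rw [hSy, hPy, ← hudef] at hey
    rw [hSz, hPz, ← hvdef] at hez
    rw [hey, hez]; ring
  have hPpos : 0 < P := by
    apply Finset.prod_pos
    intro i hi
    have hi' := Finset.mem_range.mp hi
    have h2 : (2:ℝ) ≤ (b i:ℝ) := by exact_mod_cast (hb i (by omega)).1
    apply div_pos one_pos
    nlinarith
  have hPge : 1/(E:ℝ)^(2*j) ≤ P := prod_ge E (by omega) b j (fun i hi => hb i (by omega))
  have habs : |y - z| = P * |u - v| := by rw [hyz, abs_mul, abs_of_pos hPpos]
  have hpow : (1:ℝ)/(E:ℝ)^(2*m) = (1/(E:ℝ)^(2*j)) * (1/(E:ℝ)^(2*(m-j))) := by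
    rw [div_mul_div_comm, one_mul, ← pow_add]
    congr 2
    omega
  suffices hsuff : 1/(E:ℝ)^(2*(m-j)) ≤ |u - v| by
    rw [habs, hpow]
    exact mul_le_mul hPge hsuff (by positivity) (le_of_lt hPpos)
  -- shared facts
  have hE0 : (0:ℝ) < (E:ℝ) := by linarith
  have hE2 : (E:ℝ)^2 = (E:ℝ)*(E:ℝ) := by ring
  by_cases hcase : j = m - 1
  · -- j = m - 1 : last-digit separation
    have hm1 : m - j = 1 := by omega
    rw [hm1]
    have hA' : A = c (m-1) := by rw [hAdef, hcase]
    have hB' : B = b (m-1) := by rw [hBdef, hcase]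
    have hsplit : B + 2 ≤ A ∨ A + 2 ≤ B := by
      rw [hA', hB']
      rcases abs_cases ((c (m - 1) : ℤ) - (b (m - 1) : ℤ)) with ⟨h1, _⟩ | ⟨h1, _⟩ <;> omega
    have hBE1 : B + 1 ≤ E := by rw [hB']; omega
    have hBE1r : (B:ℝ) + 1 ≤ (E:ℝ) := by exact_mod_cast hBE1
    rcases hsplit with hAB | hAB
    · have hABr : (B:ℝ) + 2 ≤ (A:ℝ) := by exact_mod_cast hAB
      have h := arith1 (E:ℝ) (A:ℝ) (B:ℝ) u v (by linarith) hBr hBE1r hABr huA' hu0 hvB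
      calc 1/(E:ℝ)^(2*1) = 1/(E:ℝ)^2 := by norm_num
        _ ≤ v - u := h
        _ ≤ |v - u| := le_abs_self _
        _ = |u - v| := abs_sub_comm _ _
    · have hABr : (A:ℝ) + 2 ≤ (B:ℝ) := by exact_mod_cast hAB
      have hAE : A + 3 ≤ E := by
        have : B ≤ E - 1 := by rw [hB']; exact he2
        omega
      have hAEr : (A:ℝ) + 3 ≤ (E:ℝ) := by exact_mod_cast hAE
      have h := arith2 (E:ℝ) (A:ℝ) (B:ℝ) u v (by linarith) hAr hAEr hABr hvB' hv0 huA
      calc 1/(E:ℝ)^(2*1) = 1/(E:ℝ)^2 := by norm_num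
        _ ≤ u - v := h
        _ ≤ |u - v| := le_abs_self _
  · -- j < m - 1
    have hjm : j + 2 ≤ m := by omega
    have hvv' : lurothMap^[j+1] z = lurothMap v := by
      rw [Function.iterate_succ_apply', hvdef]
    obtain ⟨hv'0, hv'1⟩ := map_mem hv0 hv1
    set v' := lurothMap v with hv'def
    have hvid := map_identity hv0 hv1
    rw [hdvB] at hvid
    rw [← hv'def] at hvid
    have hdv' : ∀ i, i < m - (j+1) → lurothDigitSeq v' i = b (j+1+i) := by
      intro i hi
      have h1 : lurothDigitSeq v' i = lurothDigitSeq z (j+1+i) := by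
        rw [← hvv', digitSeq_shift]
      rw [h1]; exact hzd _ (by omega)
    rcases Nat.lt_or_ge B A with hBA | hAB'
    · -- b-digit smaller at j : u left of v, use next digit of v
      have hCd : lurothDigit v' = b (j+1) := by
        have h0' := hdv' 0 (by omega)
        simpa [lurothDigitSeq] using h0'
      have hCE : b (j+1) ≤ E := (hb (j+1) (by omega)).2
      have hCEr : ((b (j+1):ℕ):ℝ) ≤ (E:ℝ) := by exact_mod_cast hCE
      obtain ⟨hv'C, _⟩ := digit_bounds hv'0 hv'1
      rw [hCd] at hv'C
      have hBAr : (B:ℝ) + 1 ≤ (A:ℝ) := by exact_mod_cast (by omega : B + 1 ≤ A)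
      have h := arith3 (E:ℝ) (A:ℝ) (B:ℝ) ((b (j+1):ℕ):ℝ) u v v' (by linarith) hBr hBEr
        hBAr huA' hu0 hvid hv'C hCEr hv'0
      have h3 : (1:ℝ)/(E:ℝ)^(2*(m-j)) ≤ 1/(E:ℝ)^3 := by
        apply one_div_le_one_div_of_le (by positivity)
        apply pow_le_pow_right₀ (by linarith) (by omega)
      calc 1/(E:ℝ)^(2*(m-j)) ≤ 1/(E:ℝ)^3 := h3
        _ ≤ v - u := h
        _ ≤ |v - u| := le_abs_self _
        _ = |u - v| := abs_sub_comm _ _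
    · -- c-digit smaller at j : v left of u, use sup bound on v
      have hBA2r : (A:ℝ) + 1 ≤ (B:ℝ) := by exact_mod_cast (by omega : A + 1 ≤ B)
      set n0 := m - j - 2 with hn0def
      have hd2 : ∀ i, 2 ≤ lurothDigitSeq v' i := digitSeq_two_le hv'0 hv'1
      have hvF := val_le_F hv'0 hv'1 (n0+1)
      have hgap := F_gap (lurothDigitSeq v') hd2 n0
      have hlast : lurothDigitSeq v' n0 = b (m-1) := by
        rw [hdv' n0 (by omega)]
        congr 1
        omega
      have he1r : (3:ℝ) ≤ ((b (m-1):ℕ):ℝ) := by exact_mod_cast he1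
      have hprodpos := prod_pos' (lurothDigitSeq v') hd2 n0
      have hprod : 1/(E:ℝ)^(2*n0) ≤ ∏ i ∈ Finset.range n0,
          (1:ℝ)/((lurothDigitSeq v' i:ℝ)*((lurothDigitSeq v' i:ℝ)-1)) := by
        apply prod_ge E (by omega)
        intro i hi
        rw [hdv' i (by omega)]
        exact hb _ (by omega)
      have hhalf : (1:ℝ)/2 ≤ 1 - 1/((lurothDigitSeq v' n0:ℝ)-1) := by
        rw [hlast]
        have h5 : 1/(((b (m-1):ℕ):ℝ)-1) ≤ 1/2 :=
          one_div_le_one_div_of_le (by norm_num) (by linarith)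
        linarith
      have hv'le : v' ≤ 1 - (1/(E:ℝ)^(2*n0)) * (1/2) := by
        have h6 : (1/(E:ℝ)^(2*n0)) * (1/2) ≤ (∏ i ∈ Finset.range n0,
            (1:ℝ)/((lurothDigitSeq v' i:ℝ)*((lurothDigitSeq v' i:ℝ)-1)))
            * (1 - 1/((lurothDigitSeq v' n0:ℝ)-1)) :=
          mul_le_mul hprod hhalf (by norm_num) hprodpos.le
        linarith
      have h := arith4 (E:ℝ) (A:ℝ) (B:ℝ) u v v' ((1/(E:ℝ)^(2*n0)) * (1/2))
        (by linarith) hBr hBEr hAr hBA2r huA hu0 hvid hv'le (by positivity)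
      have hm2 : 2*(m-j) = 2*n0 + 4 := by omega
      rw [hm2]
      have hstep : (1:ℝ)/(E:ℝ)^(2*n0+4) ≤ 1/(E:ℝ)^2 * ((1/(E:ℝ)^(2*n0)) * (1/2)) := by
        have hr : 1/(E:ℝ)^2 * ((1/(E:ℝ)^(2*n0)) * (1/2)) = 1/(2*(E:ℝ)^(2*n0+2)) := by
          rw [pow_add]
          ring
        rw [hr]
        apply one_div_le_one_div_of_le (by positivity)
        have h7 : (E:ℝ)^(2*n0+4) = (E:ℝ)^(2*n0+2) * (E:ℝ)^2 := by
          rw [← pow_add]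
        have h8 : (0:ℝ) < (E:ℝ)^(2*n0+2) := by positivity
        nlinarith [mul_le_mul_of_nonneg_left (show (2:ℝ) ≤ (E:ℝ)^2 by nlinarith) h8.le]
      exact le_trans (le_trans hstep h) (le_abs_self _)
end
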